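/- In type D_N, the sum of the Kac–Wakimoto coefficients equals (N−1)N(2N−1)/6: with η = exp(πi/(N−1)), Σ_{i=1}^{N−2} (N−1)/2 · (2−η^i−η^{−i})/(2+η^i+η^{−i}) + 2·(N−1)²/2 = (N−1)N(2N−1)/6. -/

import Mathlib

open Complex

section KacWakimotoAux
open Finset

lemma sum_id_c (m : ℕ) : ∑ k ∈ range m, (k : ℂ) = m * (m - 1) / 2 := by
  induction m with
  | zero => simp
  | succ m ih => rw [Finset.sum_range_succ, ih]; push_cast; ring

lemma sum_sq_c (m : ℕ) : ∑ k ∈ range m, (k : ℂ) ^ 2 = m * (m - 1) * (2 * m - 1) / 6 := by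
  induction m with
  | zero => simp
  | succ m ih => rw [Finset.sum_range_succ, ih]; push_cast; ring

lemma sum_alt_c (n : ℕ) : ∑ k ∈ range (2 * n), (k : ℂ) * (-1) ^ k = -n := by
  induction n with
  | zero => simp
  | succ n ih =>
      have h1 : ((-1 : ℂ)) ^ (2 * n) = 1 := by rw [pow_mul]; norm_num
      have h2 : ((-1 : ℂ)) ^ (2 * n + 1) = -1 := by rw [pow_succ, h1]; ring
      rw [show 2 * (n + 1) = (2 * n + 1) + 1 from by ring, Finset.sum_range_succ,
        Finset.sum_range_succ, ih, h1, h2]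
      push_cast; ring

lemma sum_altsq_c (n : ℕ) : ∑ k ∈ range (2 * n), (k : ℂ) ^ 2 * (-1) ^ k = -(n : ℂ) * (2 * n - 1) := by
  induction n with
  | zero => simp
  | succ n ih =>
      have h1 : ((-1 : ℂ)) ^ (2 * n) = 1 := by rw [pow_mul]; norm_num
      have h2 : ((-1 : ℂ)) ^ (2 * n + 1) = -1 := by rw [pow_succ, h1]; ring
      rw [show 2 * (n + 1) = (2 * n + 1) + 1 from by ring, Finset.sum_range_succ,
        Finset.sum_range_succ, ih, h1, h2]
      push_cast; ring

lemma geo1 (x : ℂ) (m : ℕ) :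
    (x - 1) ^ 2 * ∑ k ∈ range m, (k : ℂ) * x ^ k
      = ((m : ℂ) - 1) * x ^ (m + 1) - m * x ^ m + x := by
  induction m with
  | zero => simp
  | succ m ih =>
      rw [Finset.sum_range_succ, mul_add, ih]
      push_cast; ring

lemma geo2 (x : ℂ) (m : ℕ) :
    (x - 1) ^ 3 * ∑ k ∈ range m, (k : ℂ) ^ 2 * x ^ k
      = ((m : ℂ) - 1) ^ 2 * x ^ (m + 2) - (2 * ((m : ℂ) - 1) ^ 2 + 2 * m - 3) * x ^ (m + 1)
        + (m : ℂ) ^ 2 * x ^ m - x ^ 2 - x := by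
  induction m with
  | zero => simp; ring
  | succ m ih =>
      rw [Finset.sum_range_succ, mul_add, ih]
      push_cast; ring

lemma rootA (m : ℕ) (ζ : ℂ) (hζ : ζ ^ m = 1) (h1 : ζ ≠ 1) :
    (ζ - 1) * ∑ k ∈ range m, (k : ℂ) * ζ ^ k = m := by
  have hne : ζ - 1 ≠ 0 := sub_ne_zero.mpr h1
  apply mul_left_cancel₀ hne
  linear_combination geo1 ζ m + (((m : ℂ) - 1) * ζ - m) * hζ

lemma rootB (m : ℕ) (ζ : ℂ) (hζ : ζ ^ m = 1) (h1 : ζ ≠ 1) :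
    (ζ - 1) ^ 2 * ∑ k ∈ range m, (k : ℂ) ^ 2 * ζ ^ k
      = (m : ℂ) * ((m : ℂ) - 2) * (ζ - 1) - 2 * m := by
  have hne : ζ - 1 ≠ 0 := sub_ne_zero.mpr h1
  apply mul_left_cancel₀ hne
  linear_combination geo2 ζ m
    + (((m : ℂ) - 1) ^ 2 * ζ ^ 2 - (2 * ((m : ℂ) - 1) ^ 2 + 2 * m - 3) * ζ + (m : ℂ) ^ 2) * hζ

section
variable (N m : ℕ) (η : ℂ)

lemma main_sum (hN : 3 ≤ N) (hm : m = 2 * (N - 1)) (hη0 : η ≠ 0)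
    (hprim : IsPrimitiveRoot η m) :
    ∑ i ∈ Finset.Icc 1 (N - 2),
        (2 - η ^ i - η ^ (-(i : ℤ))) / (2 + η ^ i + η ^ (-(i : ℤ)))
      = ((N : ℂ) - 2) * (2 * (N : ℂ) - 3) / 3 := by
  have hm0 : m ≠ 0 := by omega
  have hmc : (m : ℂ) = 2 * ((N : ℂ) - 1) := by
    rw [hm]; push_cast [Nat.cast_sub (by omega : 1 ≤ N)]; ring
  have hmC : (m : ℂ) ≠ 0 := Nat.cast_ne_zero.mpr hm0
  have hηm : η ^ m = 1 := hprim.pow_eq_one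
  have hηne1 : ∀ k, 0 < k → k < m → η ^ k ≠ 1 := by
    intro k hk hkm
    exact hprim.pow_ne_one_of_pos_of_lt hk.ne' hkm
  have hηn : η ^ (N - 1) = -1 := by
    have h2 : η ^ (N - 1) * η ^ (N - 1) = 1 := by
      rw [← pow_add, show N - 1 + (N - 1) = m from by omega, hηm]
    have h3 : η ^ (N - 1) ≠ 1 := hηne1 _ (by omega) (by omega)
    have h4 : (η ^ (N - 1) - 1) * (η ^ (N - 1) + 1) = 0 := by linear_combination h2
    rcases mul_eq_zero.mp h4 with h | h
    · exact absurd (by linear_combination h) h3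
    · linear_combination h
  set S : Finset ℕ := (Finset.Icc 1 (m - 1)).erase (N - 1) with hS
  have hmemS : ∀ i, i ∈ S ↔ (1 ≤ i ∧ i ≤ m - 1 ∧ i ≠ N - 1) := by
    intro i; rw [hS]; simp [Finset.mem_erase, Finset.mem_Icc]; tauto
  have hneg1 : ∀ i ∈ S, η ^ i ≠ -1 := by
    intro i hi heq
    rw [hmemS] at hi
    have h2 : η ^ (2 * i) = 1 := by
      rw [two_mul, pow_add, heq]; norm_num
    rcases lt_trichotomy (2 * i) m with h | h | h
    · exact hηne1 _ (by omega) h h2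
    · omega
    · have h5 : η ^ (2 * i - m) * η ^ m = η ^ (2 * i) := by
        rw [← pow_add]; congr 1; omega
      rw [hηm, mul_one, h2] at h5
      exact hηne1 _ (by omega) (by omega) h5
  have hden : ∀ i ∈ S, 1 + η ^ i ≠ 0 := fun i hi h => hneg1 i hi (by linear_combination h)
  have hzpow : ∀ i : ℕ, η ^ (-(i : ℤ)) = (η ^ i)⁻¹ := by
    intro i; rw [zpow_neg, zpow_natCast]
  -- step 1 : symmetry
  have hpowsym : ∀ a, a ≤ m → η ^ (m - a) = (η ^ a)⁻¹ := by
    intro a ha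
    have h : η ^ (m - a) * η ^ a = 1 := by
      rw [← pow_add, show m - a + a = m from by omega, hηm]
    exact eq_inv_of_mul_eq_one_left h
  have hsplit : ∑ i ∈ S, (2 - η ^ i - η ^ (-(i : ℤ))) / (2 + η ^ i + η ^ (-(i : ℤ)))
      = 2 * ∑ i ∈ Finset.Icc 1 (N - 2),
          (2 - η ^ i - η ^ (-(i : ℤ))) / (2 + η ^ i + η ^ (-(i : ℤ))) := by
    have hsym : ∀ a, 0 < a → a < m →
        (2 - η ^ (m - a) - η ^ (-((m - a : ℕ) : ℤ))) / (2 + η ^ (m - a) + η ^ (-((m - a : ℕ) : ℤ)))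
        = (2 - η ^ a - η ^ (-(a : ℤ))) / (2 + η ^ a + η ^ (-(a : ℤ))) := by
      intro a h1 h2
      rw [hzpow (m - a), hzpow a, hpowsym a (le_of_lt h2), inv_inv]
      ring_nf
    have hdecomp : S = Finset.Icc 1 (N - 2) ∪ Finset.Icc N (m - 1) := by
      ext x; rw [hmemS]; simp only [Finset.mem_union, Finset.mem_Icc]; omega
    rw [hdecomp, Finset.sum_union (by
      rw [Finset.disjoint_left]; intro a ha hb
      simp only [Finset.mem_Icc] at ha hb; omega)]
    have hre : ∑ i ∈ Finset.Icc N (m - 1),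
          (2 - η ^ i - η ^ (-(i : ℤ))) / (2 + η ^ i + η ^ (-(i : ℤ)))
        = ∑ i ∈ Finset.Icc 1 (N - 2),
          (2 - η ^ i - η ^ (-(i : ℤ))) / (2 + η ^ i + η ^ (-(i : ℤ))) := by
      refine Finset.sum_nbij' (i := fun a => m - a) (j := fun a => m - a) ?_ ?_ ?_ ?_ ?_
      · intro a ha; simp only [Finset.mem_Icc] at ha ⊢; omega
      · intro a ha; simp only [Finset.mem_Icc] at ha ⊢; omega
      · intro a ha; simp only [Finset.mem_Icc] at ha; show m - (m - a) = a; omega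
      · intro a ha; simp only [Finset.mem_Icc] at ha; show m - (m - a) = a; omega
      · intro a ha
        simp only [Finset.mem_Icc] at ha
        have h5 := hsym (m - a) (by omega) (by omega)
        rw [show m - (m - a) = a from by omega] at h5
        beta_reduce
        exact h5
    rw [hre]; ring
  -- step 2 : partial fractions
  have key : ∀ i ∈ S, (2 - η ^ i - η ^ (-(i : ℤ))) / (2 + η ^ i + η ^ (-(i : ℤ)))
      = -1 + 4 * (1 + η ^ i)⁻¹ - 4 * ((1 + η ^ i)⁻¹) ^ 2 := by
    intro i hi
    have h1 := hden i hi
    have h0 : η ^ i ≠ 0 := pow_ne_zero _ hη0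
    have hd2 : 2 + η ^ i + (η ^ i)⁻¹ ≠ 0 := by
      intro h
      have h4 : (2 + η ^ i + (η ^ i)⁻¹) * η ^ i = (1 + η ^ i) ^ 2 := by
        field_simp; ring
      rw [h, zero_mul] at h4
      exact h1 (pow_eq_zero_iff two_ne_zero |>.mp h4.symm)
    rw [hzpow i]
    rw [div_eq_iff hd2]
    field_simp
    ring
  -- step 3 : inverse as root-of-unity sums
  have hζm : ∀ i : ℕ, (-η ^ i) ^ m = 1 := by
    intro i
    have h1 : ((-1 : ℂ)) ^ m = 1 := by rw [hm, pow_mul]; norm_num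
    have h2 : (η ^ i) ^ m = 1 := by rw [← pow_mul, mul_comm, pow_mul, hηm, one_pow]
    rw [neg_pow, h1, one_mul, h2]
  have hζ1 : ∀ i ∈ S, -η ^ i ≠ 1 := fun i hi h => hneg1 i hi (by linear_combination -h)
  have hu1 : ∀ i ∈ S, (1 + η ^ i)⁻¹
      = -(∑ k ∈ range m, (k : ℂ) * (-η ^ i) ^ k) / m := by
    intro i hi
    have h1 := hden i hi
    have hrA := rootA m (-η ^ i) (hζm i) (hζ1 i hi)
    have hmul : (1 + η ^ i) * (-(∑ k ∈ range m, (k : ℂ) * (-η ^ i) ^ k) / m) = 1 := by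
      field_simp
      linear_combination hrA
    exact inv_eq_of_mul_eq_one_right hmul
  have hu2 : ∀ i ∈ S, ((1 + η ^ i)⁻¹) ^ 2
      = (((m : ℂ) - 2) * (∑ k ∈ range m, (k : ℂ) * (-η ^ i) ^ k)
          - (∑ k ∈ range m, (k : ℂ) ^ 2 * (-η ^ i) ^ k)) / (2 * m) := by
    intro i hi
    have h1 := hden i hi
    have hrA := rootA m (-η ^ i) (hζm i) (hζ1 i hi)
    have hrB := rootB m (-η ^ i) (hζm i) (hζ1 i hi)
    have hmul : (1 + η ^ i) ^ 2 * ((((m : ℂ) - 2) * (∑ k ∈ range m, (k : ℂ) * (-η ^ i) ^ k)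
        - (∑ k ∈ range m, (k : ℂ) ^ 2 * (-η ^ i) ^ k)) / (2 * m)) = 1 := by
      field_simp
      linear_combination (((m : ℂ) - 2) * ((-η ^ i) - 1)) * hrA - hrB
    rw [inv_pow]
    exact inv_eq_of_mul_eq_one_right hmul
  -- step 4 : the double sums
  have hE : ∀ k, 0 < k → k < m → ∑ i ∈ S, (η ^ k) ^ i = -1 - (-1) ^ k := by
    intro k hk hkm
    have hx1 : η ^ k ≠ 1 := hηne1 k hk hkm
    have hxm : (η ^ k) ^ m = 1 := by rw [← pow_mul, mul_comm, pow_mul, hηm, one_pow]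
    have hgeom : ∑ i ∈ range m, (η ^ k) ^ i = 0 := by
      rw [geom_sum_eq hx1, hxm]; simp
    have hmem : N - 1 ∈ Finset.Icc 1 (m - 1) := by simp only [Finset.mem_Icc]; omega
    have h1 : ∑ i ∈ S, (η ^ k) ^ i + (η ^ k) ^ (N - 1)
        = ∑ i ∈ Finset.Icc 1 (m - 1), (η ^ k) ^ i := by
      rw [hS]; exact Finset.sum_erase_add _ _ hmem
    have h2 : range m = insert 0 (Finset.Icc 1 (m - 1)) := by
      ext x; simp only [Finset.mem_range, Finset.mem_insert, Finset.mem_Icc]; omega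
    rw [h2, Finset.sum_insert (by simp)] at hgeom
    have h3 : (η ^ k) ^ (N - 1) = (-1) ^ k := by rw [pow_right_comm, hηn]
    rw [← h1, h3] at hgeom
    linear_combination hgeom
  have hSA : ∑ i ∈ S, (∑ k ∈ range m, (k : ℂ) * (-η ^ i) ^ k)
      = ((N : ℂ) - 1) - (m : ℂ) * ((m : ℂ) - 1) / 2 := by
    rw [Finset.sum_comm]
    have hterm : ∀ k ∈ range m, ∑ i ∈ S, (k : ℂ) * (-η ^ i) ^ k
        = -(k : ℂ) * (-1) ^ k - k := by
      intro k hk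
      rcases Nat.eq_zero_or_pos k with h0 | h0
      · subst h0; simp
      · have hsq : ((-1 : ℂ)) ^ k * (-1) ^ k = 1 := by
          rw [← pow_add, ← two_mul, pow_mul]; norm_num
        calc ∑ i ∈ S, (k : ℂ) * (-η ^ i) ^ k
            = ∑ i ∈ S, (k : ℂ) * (-1 : ℂ) ^ k * (η ^ k) ^ i := by
              refine Finset.sum_congr rfl fun i _ => ?_
              rw [neg_pow, pow_right_comm]; ring
          _ = (k : ℂ) * (-1 : ℂ) ^ k * ∑ i ∈ S, (η ^ k) ^ i := by rw [Finset.mul_sum]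
          _ = (k : ℂ) * (-1 : ℂ) ^ k * (-1 - (-1) ^ k) := by
              rw [hE k h0 (Finset.mem_range.mp hk)]
          _ = -(k : ℂ) * (-1) ^ k - k := by linear_combination (-(k : ℂ)) * hsq
    rw [Finset.sum_congr rfl hterm, Finset.sum_sub_distrib]
    have e1 : ∑ k ∈ range m, (-(k : ℂ) * (-1) ^ k) = -∑ k ∈ range m, ((k : ℂ) * (-1) ^ k) := by
      rw [← Finset.sum_neg_distrib]; exact Finset.sum_congr rfl fun k _ => by ring
    rw [e1, hm, sum_alt_c, sum_id_c]
    push_cast [Nat.cast_sub (by omega : 1 ≤ N)]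
    ring
  have hSB : ∑ i ∈ S, (∑ k ∈ range m, (k : ℂ) ^ 2 * (-η ^ i) ^ k)
      = ((N : ℂ) - 1) * (2 * ((N : ℂ) - 1) - 1)
        - (m : ℂ) * ((m : ℂ) - 1) * (2 * (m : ℂ) - 1) / 6 := by
    rw [Finset.sum_comm]
    have hterm : ∀ k ∈ range m, ∑ i ∈ S, (k : ℂ) ^ 2 * (-η ^ i) ^ k
        = -(k : ℂ) ^ 2 * (-1) ^ k - (k : ℂ) ^ 2 := by
      intro k hk
      rcases Nat.eq_zero_or_pos k with h0 | h0
      · subst h0; simp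
      · have hsq : ((-1 : ℂ)) ^ k * (-1) ^ k = 1 := by
          rw [← pow_add, ← two_mul, pow_mul]; norm_num
        calc ∑ i ∈ S, (k : ℂ) ^ 2 * (-η ^ i) ^ k
            = ∑ i ∈ S, (k : ℂ) ^ 2 * (-1 : ℂ) ^ k * (η ^ k) ^ i := by
              refine Finset.sum_congr rfl fun i _ => ?_
              rw [neg_pow, pow_right_comm]; ring
          _ = (k : ℂ) ^ 2 * (-1 : ℂ) ^ k * ∑ i ∈ S, (η ^ k) ^ i := by rw [Finset.mul_sum]
          _ = (k : ℂ) ^ 2 * (-1 : ℂ) ^ k * (-1 - (-1) ^ k) := by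
              rw [hE k h0 (Finset.mem_range.mp hk)]
          _ = -(k : ℂ) ^ 2 * (-1) ^ k - (k : ℂ) ^ 2 := by
              linear_combination (-((k : ℂ) ^ 2)) * hsq
    rw [Finset.sum_congr rfl hterm, Finset.sum_sub_distrib]
    have e1 : ∑ k ∈ range m, (-(k : ℂ) ^ 2 * (-1) ^ k)
        = -∑ k ∈ range m, ((k : ℂ) ^ 2 * (-1) ^ k) := by
      rw [← Finset.sum_neg_distrib]; exact Finset.sum_congr rfl fun k _ => by ring
    rw [e1, hm, sum_altsq_c, sum_sq_c]
    push_cast [Nat.cast_sub (by omega : 1 ≤ N)]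
    ring
  -- step 5 : assemble
  have hcard : (S.card : ℂ) = (m : ℂ) - 2 := by
    have h1 : S.card = m - 2 := by
      rw [hS, Finset.card_erase_of_mem (by simp [Finset.mem_Icc]; omega), Nat.card_Icc]
      omega
    rw [h1, Nat.cast_sub (by omega : 2 ≤ m)]; norm_num
  have hT : ∑ i ∈ S, (2 - η ^ i - η ^ (-(i : ℤ))) / (2 + η ^ i + η ^ (-(i : ℤ)))
      = -((m : ℂ) - 2)
        + 4 * (-(((N : ℂ) - 1) - (m : ℂ) * ((m : ℂ) - 1) / 2) / m)
        - 4 * ((((m : ℂ) - 2) * (((N : ℂ) - 1) - (m : ℂ) * ((m : ℂ) - 1) / 2)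
            - (((N : ℂ) - 1) * (2 * ((N : ℂ) - 1) - 1)
              - (m : ℂ) * ((m : ℂ) - 1) * (2 * (m : ℂ) - 1) / 6)) / (2 * m)) := by
    rw [Finset.sum_congr rfl key]
    rw [Finset.sum_sub_distrib, Finset.sum_add_distrib, ← Finset.mul_sum, ← Finset.mul_sum,
      Finset.sum_const, nsmul_eq_mul, Finset.sum_congr rfl hu1, Finset.sum_congr rfl hu2,
      ← Finset.sum_div, ← Finset.sum_div]
    rw [Finset.sum_neg_distrib, Finset.sum_sub_distrib, ← Finset.mul_sum, hSA, hSB, hcard]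
    ring
  have hNC : (N : ℂ) - 1 ≠ 0 := by
    intro h
    have : (m : ℂ) = 0 := by rw [hmc, h]; ring
    exact hmC this
  have hval : -((m : ℂ) - 2)
        + 4 * (-(((N : ℂ) - 1) - (m : ℂ) * ((m : ℂ) - 1) / 2) / m)
        - 4 * ((((m : ℂ) - 2) * (((N : ℂ) - 1) - (m : ℂ) * ((m : ℂ) - 1) / 2)
            - (((N : ℂ) - 1) * (2 * ((N : ℂ) - 1) - 1)
              - (m : ℂ) * ((m : ℂ) - 1) * (2 * (m : ℂ) - 1) / 6)) / (2 * m))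
      = 2 * (((N : ℂ) - 2) * (2 * (N : ℂ) - 3) / 3) := by
    have hD : (192:ℂ) - (N:ℂ)*384 + (N:ℂ)^2*192 ≠ 0 := by
      intro h
      apply hNC
      have h2 : ((N:ℂ)-1)^2 = 0 := by linear_combination h / 192
      exact pow_eq_zero_iff two_ne_zero |>.mp h2
    rw [hmc]
    field_simp [hNC]
    ring_nf
  rw [hsplit, hval] at hT
  exact mul_left_cancel₀ two_ne_zero hT

end

end KacWakimotoAux

/-- Type `D_N`: with `η = exp(πi/(N−1))`, the sum of the Kac–Wakimoto coefficients
`∑_{i=1}^{N−2} (N−1)/2 · (2−η^i−η^{−i})/(2+η^i+η^{−i}) + 2 · (N−1)²/2`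
equals `(N−1) N (2N−1)/6`. -/
theorem sum_g_D (N : ℕ) (hN : 3 ≤ N) (η : ℂ)
    (hη : η = Complex.exp (Real.pi * Complex.I / ((N : ℂ) - 1))) :
    (∑ i ∈ Finset.Icc 1 (N - 2),
        ((N : ℂ) - 1) / 2 * ((2 - η ^ i - η ^ (-(i : ℤ))) / (2 + η ^ i + η ^ (-(i : ℤ)))))
      + 2 * (((N : ℂ) - 1) ^ 2 / 2)
      = ((N : ℂ) - 1) * (N : ℂ) * (2 * (N : ℂ) - 1) / 6 := by
  have hm0 : 2 * (N - 1) ≠ 0 := by omega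
  have hcast : ((N - 1 : ℕ) : ℂ) = (N : ℂ) - 1 := by
    rw [Nat.cast_sub (by omega : 1 ≤ N)]; norm_num
  have hNC : (N : ℂ) - 1 ≠ 0 := by
    rw [← hcast]
    exact Nat.cast_ne_zero.mpr (by omega)
  have hη0 : η ≠ 0 := by rw [hη]; exact Complex.exp_ne_zero _
  have hprim : IsPrimitiveRoot η (2 * (N - 1)) := by
    have h2 : η = Complex.exp (2 * Real.pi * Complex.I / ((2 * (N - 1) : ℕ) : ℂ)) := by
      rw [hη]
      congr 1
      have hmc : ((2 * (N - 1) : ℕ) : ℂ) = 2 * ((N : ℂ) - 1) := by push_cast [hcast]; ring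
      rw [hmc]
      field_simp
    rw [h2]
    exact Complex.isPrimitiveRoot_exp _ hm0
  have hmain := main_sum N (2 * (N - 1)) η hN rfl hη0 hprim
  rw [← Finset.mul_sum, hmain]
  ring
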